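/- For every integer n ≥ 1, all positive reported variances V₁,…,Vₙ, all positive reported odds ratios R₁,…,Rₙ, every p ∈ (0,1), and every z > 0, there exist a0 > 0 and b0 > 0 with Vᵢ − 1/a0 − 1/b0 > 0 for every i such that (a0, b0) satisfies the Hamling odds-ratio system. -/

import Mathlib

open Finset

noncomputable def SS {n : ℕ} (w V : Fin n → ℝ) (u : ℝ) : ℝ := ∑ i, w i / (V i - u)

lemma SS_pos {n : ℕ} {w V : Fin n → ℝ} {u : ℝ} (hne : (univ : Finset (Fin n)).Nonempty)
    (hw : ∀ i, 0 < w i) (hu : ∀ i, u < V i) : 0 < SS w V u :=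
  Finset.sum_pos (fun i _ => div_pos (hw i) (by linarith [hu i])) hne

lemma SS_mono {n : ℕ} {w V : Fin n → ℝ} {u v : ℝ} (hne : (univ : Finset (Fin n)).Nonempty)
    (hw : ∀ i, 0 < w i) (huv : u < v) (hv : ∀ i, v < V i) : SS w V u < SS w V v :=
  Finset.sum_lt_sum_of_nonempty hne (fun i _ =>
    div_lt_div_of_pos_left (hw i) (by linarith [hv i]) (by linarith))

lemma SS_cont {n : ℕ} (w V : Fin n → ℝ) (s : Set ℝ)
    (h : ∀ u ∈ s, ∀ i, V i - u ≠ 0) : ContinuousOn (SS w V) s := by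
  apply continuousOn_finset_sum
  intro i _
  exact continuousOn_const.div (continuousOn_const.sub continuousOn_id) (fun u hu => h u hu i)

lemma SS_le {n : ℕ} {w V : Fin n → ℝ} {u : ℝ} (hw : ∀ i, 0 ≤ w i) (hV : ∀ i, 0 < V i)
    (hu : ∀ i, u ≤ V i / 2) : SS w V u ≤ ∑ i, w i / (V i / 2) := by
  apply Finset.sum_le_sum
  intro i _
  have h1 := hV i
  have h2 := hu i
  gcongr
  · exact hw i
  · linarith

lemma SS_single_le {n : ℕ} {w V : Fin n → ℝ} {u : ℝ} (j : Fin n) (hw : ∀ i, 0 ≤ w i)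
    (hu : ∀ i, u < V i) : w j / (V j - u) ≤ SS w V u :=
  Finset.single_le_sum (f := fun i => w i / (V i - u))
    (fun i _ => div_nonneg (hw i) (by linarith [hu i])) (mem_univ j)

noncomputable def Pfun {n : ℕ} (V : Fin n → ℝ) (c u : ℝ) : ℝ :=
  u * SS (fun _ => (1:ℝ)) V u - c

noncomputable def Qfun {n : ℕ} (V R : Fin n → ℝ) (c u : ℝ) : ℝ :=
  c - u * SS (fun i => 1 / R i) V u

noncomputable def Phif {n : ℕ} (V R : Fin n → ℝ) (c z p u : ℝ) : ℝ :=
  Pfun V c u * (Pfun V c u + Qfun V R c u)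
    - z * p * (Pfun V c u + Qfun V R c u) * Qfun V R c u
    - u * z * p * (SS (fun _ => (1:ℝ)) V u * Pfun V c u * Qfun V R c u
        + SS R V u * (Qfun V R c u) ^ 2)

section lems
variable {n : ℕ} {V R : Fin n → ℝ} {c z p : ℝ}

lemma Pfun_mono (hne : (univ : Finset (Fin n)).Nonempty) {u v : ℝ}
    (hu : 0 < u) (huv : u < v) (hv : ∀ i, v < V i) : Pfun V c u < Pfun V c v := by
  have h1 : SS (fun _ => (1:ℝ)) V u < SS (fun _ => (1:ℝ)) V v :=
    SS_mono hne (fun _ => one_pos) huv hv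
  have h2 : 0 < SS (fun _ => (1:ℝ)) V u :=
    SS_pos hne (fun _ => one_pos) (fun i => huv.trans (hv i))
  unfold Pfun
  nlinarith [mul_lt_mul'' huv h1 hu.le h2.le]

lemma Qfun_anti (hne : (univ : Finset (Fin n)).Nonempty) (hR : ∀ i, 0 < R i) {u v : ℝ}
    (hu : 0 < u) (huv : u < v) (hv : ∀ i, v < V i) : Qfun V R c v < Qfun V R c u := by
  have h1 : SS (fun i => 1 / R i) V u < SS (fun i => 1 / R i) V v :=
    SS_mono hne (fun i => one_div_pos.mpr (hR i)) huv hv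
  have h2 : 0 < SS (fun i => 1 / R i) V u :=
    SS_pos hne (fun i => one_div_pos.mpr (hR i)) (fun i => huv.trans (hv i))
  unfold Qfun
  nlinarith [mul_lt_mul'' huv h1 hu.le h2.le]

lemma Pfun_cont {s : Set ℝ} (h : ∀ u ∈ s, ∀ i, V i - u ≠ 0) :
    ContinuousOn (fun u => Pfun V c u) s := by
  unfold Pfun
  exact (continuousOn_id.mul (SS_cont _ _ _ h)).sub continuousOn_const

lemma Qfun_cont {s : Set ℝ} (h : ∀ u ∈ s, ∀ i, V i - u ≠ 0) :
    ContinuousOn (fun u => Qfun V R c u) s := by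
  unfold Qfun
  exact continuousOn_const.sub (continuousOn_id.mul (SS_cont _ _ _ h))

lemma Phif_cont {s : Set ℝ} (h : ∀ u ∈ s, ∀ i, V i - u ≠ 0) :
    ContinuousOn (fun u => Phif V R c z p u) s := by
  have hA : ContinuousOn (SS (fun _ => (1:ℝ)) V) s := SS_cont _ _ _ h
  have hC : ContinuousOn (SS R V) s := SS_cont _ _ _ h
  have hP : ContinuousOn (fun u => Pfun V c u) s := Pfun_cont h
  have hQ : ContinuousOn (fun u => Qfun V R c u) s := Qfun_cont h
  unfold Phif
  exact ((hP.mul (hP.add hQ)).sub ((continuousOn_const.mul (hP.add hQ)).mul hQ)).sub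
    (((continuousOn_id.mul continuousOn_const).mul continuousOn_const).mul
      (((hA.mul hP).mul hQ).add (hC.mul (hQ.pow 2))))

end lems

section zeros
variable {n : ℕ} {V R : Fin n → ℝ} {c z p : ℝ}

lemma exists_zero_P (hne : (univ : Finset (Fin n)).Nonempty) (hV : ∀ i, 0 < V i)
    (j : Fin n) (hmle : ∀ i, V j ≤ V i) (hc : 0 < c) :
    ∃ uA : ℝ, 0 < uA ∧ uA < V j ∧ Pfun V c uA = 0 := by
  have hm : 0 < V j := hV j
  set KA : ℝ := ∑ i, (1:ℝ) / (V i / 2) with hKA_def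
  have hKApos : 0 < KA :=
    Finset.sum_pos (fun i _ => by have := hV i; positivity) hne
  set u1 : ℝ := min (V j / 2) (c / (2 * KA)) with hu1_def
  have hu1pos : 0 < u1 := lt_min (by linarith) (by positivity)
  have hu1m : u1 ≤ V j / 2 := min_le_left _ _
  have hPu1 : Pfun V c u1 < 0 := by
    have hAle : SS (fun _ => (1:ℝ)) V u1 ≤ KA :=
      SS_le (fun _ => zero_le_one) hV (fun i => le_trans hu1m (by linarith [hmle i]))
    have h2 : u1 ≤ c / (2 * KA) := min_le_right _ _
    have hApos : 0 < SS (fun _ => (1:ℝ)) V u1 :=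
      SS_pos hne (fun _ => one_pos) (fun i => by linarith [hmle i, hV i])
    have h3 : u1 * SS (fun _ => (1:ℝ)) V u1 ≤ u1 * KA := by nlinarith
    have h4 : u1 * KA ≤ c / 2 := by
      have h5 : u1 * KA ≤ c / (2 * KA) * KA := mul_le_mul_of_nonneg_right h2 hKApos.le
      have h6 : c / (2 * KA) * KA = c / 2 := by field_simp
      linarith
    unfold Pfun
    linarith
  set dA : ℝ := min (V j / 2) (V j / (2 * (c + 1))) with hdA_def
  have hdApos : 0 < dA := lt_min (by linarith) (by positivity)
  have hdAm : dA ≤ V j / 2 := min_le_left _ _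
  set u2 : ℝ := V j - dA with hu2_def
  have hu2half : V j / 2 ≤ u2 := by rw [hu2_def]; linarith
  have hu2m : u2 < V j := by rw [hu2_def]; linarith
  have hu2V : ∀ i, u2 < V i := fun i => lt_of_lt_of_le hu2m (hmle i)
  have hPu2 : 0 < Pfun V c u2 := by
    have h1 : (1:ℝ) / dA ≤ SS (fun _ => (1:ℝ)) V u2 := by
      have h0 := SS_single_le (w := fun _ => (1:ℝ)) (V := V) j (fun _ => zero_le_one) hu2V
      have hd : V j - u2 = dA := by rw [hu2_def]; ring
      rwa [hd] at h0
    have h3 : (c + 1) * dA ≤ V j / 2 := by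
      have h4 : dA ≤ V j / (2 * (c + 1)) := min_le_right _ _
      have h5 : (c + 1) * (V j / (2 * (c + 1))) = V j / 2 := by field_simp
      nlinarith
    have h6 : c + 1 ≤ u2 * (1 / dA) := by
      rw [mul_one_div, le_div_iff₀ hdApos]
      linarith
    have h7 : u2 * (1 / dA) ≤ u2 * SS (fun _ => (1:ℝ)) V u2 :=
      mul_le_mul_of_nonneg_left h1 (by linarith : (0:ℝ) ≤ u2)
    have h8 : c + 1 ≤ u2 * SS (fun _ => (1:ℝ)) V u2 := le_trans h6 h7
    unfold Pfun
    linarith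
  have hu1u2 : u1 ≤ u2 := le_trans hu1m hu2half
  have hVne : ∀ u ∈ Set.Icc u1 u2, ∀ i, V i - u ≠ 0 := by
    intro u hu i
    have : u < V i := lt_of_le_of_lt hu.2 (lt_of_lt_of_le hu2m (hmle i))
    linarith
  obtain ⟨uA, huAmem, hPA⟩ := intermediate_value_Ioo hu1u2 (Pfun_cont hVne)
    (Set.mem_Ioo.mpr ⟨hPu1, hPu2⟩)
  exact ⟨uA, hu1pos.trans huAmem.1, huAmem.2.trans hu2m, hPA⟩

lemma exists_zero_Q (hne : (univ : Finset (Fin n)).Nonempty) (hV : ∀ i, 0 < V i)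
    (hR : ∀ i, 0 < R i) (j : Fin n) (hmle : ∀ i, V j ≤ V i) (hc : 0 < c) :
    ∃ uB : ℝ, 0 < uB ∧ uB < V j ∧ Qfun V R c uB = 0 := by
  have hm : 0 < V j := hV j
  set KB : ℝ := ∑ i, (1 / R i) / (V i / 2) with hKB_def
  have hKBpos : 0 < KB :=
    Finset.sum_pos (fun i _ => by have := hV i; have := hR i; positivity) hne
  set u3 : ℝ := min (V j / 2) (c / (2 * KB)) with hu3_def
  have hu3pos : 0 < u3 := lt_min (by linarith) (by positivity)
  have hu3m : u3 ≤ V j / 2 := min_le_left _ _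
  have hQu3 : 0 < Qfun V R c u3 := by
    have hBle : SS (fun i => 1 / R i) V u3 ≤ KB :=
      SS_le (fun i => (one_div_pos.mpr (hR i)).le) hV
        (fun i => le_trans hu3m (by linarith [hmle i]))
    have h2 : u3 ≤ c / (2 * KB) := min_le_right _ _
    have hBpos : 0 < SS (fun i => 1 / R i) V u3 :=
      SS_pos hne (fun i => one_div_pos.mpr (hR i)) (fun i => by linarith [hmle i, hV i])
    have h3 : u3 * SS (fun i => 1 / R i) V u3 ≤ u3 * KB := by nlinarith
    have h4 : u3 * KB ≤ c / 2 := by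
      have h5 : u3 * KB ≤ c / (2 * KB) * KB := mul_le_mul_of_nonneg_right h2 hKBpos.le
      have h6 : c / (2 * KB) * KB = c / 2 := by field_simp
      linarith
    unfold Qfun
    linarith
  set dB : ℝ := min (V j / 2) (V j / (2 * (c + 1) * R j)) with hdB_def
  have hRj := hR j
  have hdBpos : 0 < dB :=
    lt_min (by linarith) (div_pos hm (mul_pos (by linarith : (0:ℝ) < 2 * (c + 1)) hRj))
  have hdBm : dB ≤ V j / 2 := min_le_left _ _
  set u4 : ℝ := V j - dB with hu4_def
  have hu4half : V j / 2 ≤ u4 := by rw [hu4_def]; linarith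
  have hu4m : u4 < V j := by rw [hu4_def]; linarith
  have hu4V : ∀ i, u4 < V i := fun i => lt_of_lt_of_le hu4m (hmle i)
  have hQu4 : Qfun V R c u4 < 0 := by
    have h1 : 1 / (R j * dB) ≤ SS (fun i => 1 / R i) V u4 := by
      have h0 := SS_single_le (w := fun i => 1 / R i) (V := V) j
        (fun i => (one_div_pos.mpr (hR i)).le) hu4V
      have hd : V j - u4 = dB := by rw [hu4_def]; ring
      rw [hd, div_div] at h0
      exact h0
    have h4 : dB ≤ V j / (2 * (c + 1) * R j) := min_le_right _ _
    have h5 : (c + 1) * R j * (V j / (2 * (c + 1) * R j)) = V j / 2 := by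
      field_simp
    have h3 : (c + 1) * R j * dB ≤ V j / 2 := by
      have h9 := mul_le_mul_of_nonneg_left h4
        (le_of_lt (mul_pos (by linarith : (0:ℝ) < c + 1) hRj))
      linarith [h5]
    have hRdB : 0 < R j * dB := mul_pos hRj hdBpos
    have h6 : c + 1 ≤ u4 * (1 / (R j * dB)) := by
      rw [mul_one_div, le_div_iff₀ hRdB]
      nlinarith [h3, hu4half]
    have h7 : u4 * (1 / (R j * dB)) ≤ u4 * SS (fun i => 1 / R i) V u4 :=
      mul_le_mul_of_nonneg_left h1 (by linarith : (0:ℝ) ≤ u4)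
    have h8 : c + 1 ≤ u4 * SS (fun i => 1 / R i) V u4 := le_trans h6 h7
    unfold Qfun
    linarith
  have hu3u4 : u3 ≤ u4 := le_trans hu3m hu4half
  have hVne : ∀ u ∈ Set.Icc u3 u4, ∀ i, V i - u ≠ 0 := by
    intro u hu i
    have : u < V i := lt_of_le_of_lt hu.2 (lt_of_lt_of_le hu4m (hmle i))
    linarith
  obtain ⟨uB, huBmem, hQB⟩ := intermediate_value_Ioo' hu3u4 (Qfun_cont hVne)
    (Set.mem_Ioo.mpr ⟨hQu4, hQu3⟩)
  exact ⟨uB, hu3pos.trans huBmem.1, huBmem.2.trans hu4m, hQB⟩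

end zeros

lemma exists_ut {n : ℕ} (hn : 0 < n) (V R : Fin n → ℝ) (hV : ∀ i, 0 < V i)
    (hR : ∀ i, 0 < R i) (c z p : ℝ) (hc : 0 < c) (hz : 0 < z) (hp0 : 0 < p) :
    ∃ u t : ℝ, 0 < u ∧ (∀ i, u < V i) ∧ 0 < t ∧
      Qfun V R c u * t = Pfun V c u ∧
      t * (1 + t) - z * p * (1 + t)
        - u * z * p * (t * SS (fun _ => (1:ℝ)) V u + SS R V u) = 0 := by
  haveI : Nonempty (Fin n) := Fin.pos_iff_nonempty.mp hn
  have hne : (univ : Finset (Fin n)).Nonempty := univ_nonempty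
  obtain ⟨j, -, hjm⟩ := Finset.exists_min_image univ V hne
  have hmle : ∀ i, V j ≤ V i := fun i => hjm i (mem_univ i)
  obtain ⟨uA, huA0, huAm, hPA⟩ := exists_zero_P hne hV j hmle hc
  obtain ⟨uB, huB0, huBm, hQB⟩ := exists_zero_Q hne hV hR j hmle hc
  have huAV : ∀ i, uA < V i := fun i => lt_of_lt_of_le huAm (hmle i)
  have huBV : ∀ i, uB < V i := fun i => lt_of_lt_of_le huBm (hmle i)
  have hzp : 0 < z * p := mul_pos hz hp0
  rcases lt_trichotomy uA uB with hlt | heq | hgt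
  · -- uA < uB : Pfun, Qfun positive in between
    have hQA : 0 < Qfun V R c uA := by
      have h := Qfun_anti (c := c) hne hR huA0 hlt huBV
      rwa [hQB] at h
    have hCA : 0 < SS R V uA := SS_pos hne hR huAV
    have hΦA : Phif V R c z p uA < 0 := by
      have h1 : Phif V R c z p uA
          = -(z * p * (Qfun V R c uA) ^ 2 * (1 + uA * SS R V uA)) := by
        unfold Phif
        rw [hPA]; ring
      have h2 : 0 < z * p * (Qfun V R c uA) ^ 2 * (1 + uA * SS R V uA) :=
        mul_pos (mul_pos hzp (pow_pos hQA 2)) (by nlinarith)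
      rw [h1]; linarith
    have hPB : 0 < Pfun V c uB := by
      have h := Pfun_mono (c := c) hne huA0 hlt huBV
      rwa [hPA] at h
    have hΦB : 0 < Phif V R c z p uB := by
      have h1 : Phif V R c z p uB = (Pfun V c uB) ^ 2 := by
        unfold Phif
        rw [hQB]; ring
      rw [h1]; positivity
    have hVne : ∀ u ∈ Set.Icc uA uB, ∀ i, V i - u ≠ 0 := by
      intro u hu i
      have : u < V i := lt_of_le_of_lt hu.2 (lt_of_lt_of_le huBm (hmle i))
      linarith
    obtain ⟨u, humem, hΦu⟩ := intermediate_value_Ioo hlt.le (Phif_cont hVne)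
      (Set.mem_Ioo.mpr ⟨hΦA, hΦB⟩)
    have hu0 : 0 < u := huA0.trans humem.1
    have hum : ∀ i, u < V i := fun i => lt_of_lt_of_le (humem.2.trans huBm) (hmle i)
    have hPu : 0 < Pfun V c u := by
      have h := Pfun_mono (c := c) hne huA0 humem.1 hum
      rwa [hPA] at h
    have hQu : 0 < Qfun V R c u := by
      have h := Qfun_anti (c := c) hne hR hu0 humem.2 huBV
      rwa [hQB] at h
    refine ⟨u, Pfun V c u / Qfun V R c u, hu0, hum, div_pos hPu hQu, ?_, ?_⟩
    · rw [mul_comm]; exact div_mul_cancel₀ _ hQu.ne'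
    · have htq : Qfun V R c u * (Pfun V c u / Qfun V R c u) = Pfun V c u := by
        rw [mul_comm]; exact div_mul_cancel₀ _ hQu.ne'
      set t : ℝ := Pfun V c u / Qfun V R c u with ht_def
      have hΦu' : Pfun V c u * (Pfun V c u + Qfun V R c u)
          - z * p * (Pfun V c u + Qfun V R c u) * Qfun V R c u
          - u * z * p * (SS (fun _ => (1:ℝ)) V u * Pfun V c u * Qfun V R c u
              + SS R V u * (Qfun V R c u) ^ 2) = 0 := by
        unfold Phif at hΦu; exact hΦu
      have h2 : (t * (1 + t) - z * p * (1 + t)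
          - u * z * p * (t * SS (fun _ => (1:ℝ)) V u + SS R V u)) * (Qfun V R c u) ^ 2
          = 0 := by
        linear_combination hΦu' + (Pfun V c u + Qfun V R c u * t
          + Qfun V R c u * (1 - z * p - u * z * p * SS (fun _ => (1:ℝ)) V u)) * htq
      exact (mul_eq_zero.mp h2).resolve_right (pow_ne_zero 2 hQu.ne')
  · -- uA = uB : common zero
    have hQA0 : Qfun V R c uA = 0 := by rw [heq]; exact hQB
    have hCA : 0 < SS R V uA := SS_pos hne hR huAV
    have hAA : 0 < SS (fun _ => (1:ℝ)) V uA := SS_pos hne (fun _ => one_pos) huAV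
    have hT1 : (1:ℝ) ≤ 1 + 2 * (z * p) + uA * (z * p) * SS (fun _ => (1:ℝ)) V uA
        + uA * (z * p) * SS R V uA := by
      nlinarith [mul_pos (mul_pos huA0 hzp) hAA, mul_pos (mul_pos huA0 hzp) hCA]
    set T : ℝ := 1 + 2 * (z * p) + uA * (z * p) * SS (fun _ => (1:ℝ)) V uA
        + uA * (z * p) * SS R V uA with hT_def
    have hcψ : ContinuousOn
        (fun s : ℝ => s * (1 + s) - z * p * (1 + s)
          - uA * z * p * (s * SS (fun _ => (1:ℝ)) V uA + SS R V uA)) (Set.Icc 0 T) := by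
      apply Continuous.continuousOn
      continuity
    have hψ0 : (0:ℝ) * (1 + 0) - z * p * (1 + 0)
        - uA * z * p * (0 * SS (fun _ => (1:ℝ)) V uA + SS R V uA) < 0 := by
      nlinarith [mul_pos (mul_pos huA0 hzp) hCA]
    have hψT : 0 < T * (1 + T) - z * p * (1 + T)
        - uA * z * p * (T * SS (fun _ => (1:ℝ)) V uA + SS R V uA) := by
      have hid : T * (1 + T) - z * p * (1 + T)
          - uA * z * p * (T * SS (fun _ => (1:ℝ)) V uA + SS R V uA)
          = 2 * T + (z * p) * (T - 1) + (uA * (z * p) * SS R V uA) * (T - 1) := by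
        rw [hT_def]; ring
      rw [hid]
      nlinarith [mul_pos (mul_pos huA0 hzp) hCA]
    obtain ⟨t, htmem, hψt⟩ := intermediate_value_Ioo (by linarith : (0:ℝ) ≤ T) hcψ
      (Set.mem_Ioo.mpr ⟨hψ0, hψT⟩)
    refine ⟨uA, t, huA0, huAV, htmem.1, ?_, hψt⟩
    rw [hQA0, hPA]; ring
  · -- uB < uA : Pfun, Qfun negative in between
    have hQA : Qfun V R c uA < 0 := by
      have h := Qfun_anti (c := c) hne hR huB0 hgt huAV
      rwa [hQB] at h
    have hPB : Pfun V c uB < 0 := by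
      have h := Pfun_mono (c := c) hne huB0 hgt huAV
      rwa [hPA] at h
    have hCA : 0 < SS R V uA := SS_pos hne hR huAV
    have hΦA : Phif V R c z p uA < 0 := by
      have h1 : Phif V R c z p uA
          = -(z * p * (Qfun V R c uA) ^ 2 * (1 + uA * SS R V uA)) := by
        unfold Phif
        rw [hPA]; ring
      have hQ2 : 0 < (Qfun V R c uA) ^ 2 := pow_two_pos_of_ne_zero hQA.ne
      have h2 : 0 < z * p * (Qfun V R c uA) ^ 2 * (1 + uA * SS R V uA) :=
        mul_pos (mul_pos hzp hQ2) (by nlinarith)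
      rw [h1]; linarith
    have hΦB : 0 < Phif V R c z p uB := by
      have h1 : Phif V R c z p uB = (Pfun V c uB) ^ 2 := by
        unfold Phif
        rw [hQB]; ring
      rw [h1]; exact pow_two_pos_of_ne_zero hPB.ne
    have hVne : ∀ u ∈ Set.Icc uB uA, ∀ i, V i - u ≠ 0 := by
      intro u hu i
      have : u < V i := lt_of_le_of_lt hu.2 (lt_of_lt_of_le huAm (hmle i))
      linarith
    obtain ⟨u, humem, hΦu⟩ := intermediate_value_Ioo' hgt.le (Phif_cont hVne)
      (Set.mem_Ioo.mpr ⟨hΦA, hΦB⟩)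
    have hu0 : 0 < u := huB0.trans humem.1
    have hum : ∀ i, u < V i := fun i => lt_of_lt_of_le (humem.2.trans huAm) (hmle i)
    have hPu : Pfun V c u < 0 := by
      have h := Pfun_mono (c := c) hne hu0 humem.2 huAV
      rwa [hPA] at h
    have hQu : Qfun V R c u < 0 := by
      have h := Qfun_anti (c := c) hne hR huB0 humem.1 hum
      rwa [hQB] at h
    refine ⟨u, Pfun V c u / Qfun V R c u, hu0, hum,
      div_pos_of_neg_of_neg hPu hQu, ?_, ?_⟩
    · rw [mul_comm]; exact div_mul_cancel₀ _ hQu.ne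
    · have htq : Qfun V R c u * (Pfun V c u / Qfun V R c u) = Pfun V c u := by
        rw [mul_comm]; exact div_mul_cancel₀ _ hQu.ne
      set t : ℝ := Pfun V c u / Qfun V R c u with ht_def
      have hΦu' : Pfun V c u * (Pfun V c u + Qfun V R c u)
          - z * p * (Pfun V c u + Qfun V R c u) * Qfun V R c u
          - u * z * p * (SS (fun _ => (1:ℝ)) V u * Pfun V c u * Qfun V R c u
              + SS R V u * (Qfun V R c u) ^ 2) = 0 := by
        unfold Phif at hΦu; exact hΦu
      have h2 : (t * (1 + t) - z * p * (1 + t)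
          - u * z * p * (t * SS (fun _ => (1:ℝ)) V u + SS R V u)) * (Qfun V R c u) ^ 2
          = 0 := by
        linear_combination hΦu' + (Pfun V c u + Qfun V R c u * t
          + Qfun V R c u * (1 - z * p - u * z * p * SS (fun _ => (1:ℝ)) V u)) * htq
      exact (mul_eq_zero.mp h2).resolve_right (pow_ne_zero 2 hQu.ne)

/-- The Hamling odds-ratio system of nonlinear equations in the unknowns `(a0, b0)`. -/
def hamlingORSystem (n : ℕ) (V R : Fin n → ℝ) (p z : ℝ) (a0 b0 : ℝ) : Prop :=
  ((1 - p) / p) * b0 = ∑ i, (1 + b0 / (a0 * R i)) / (V i - 1 / a0 - 1 / b0) ∧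
  b0 / (z * p) - a0 = ∑ i, (1 + a0 * R i / b0) / (V i - 1 / a0 - 1 / b0)

/-- For any positive reported variances and odds ratios, any `p ∈ (0,1)` and any `z > 0`,
the Hamling odds-ratio system has a positive feasible solution. -/
theorem hamlingOR_solution_exists
    (n : ℕ) (hn : 1 ≤ n) (V R : Fin n → ℝ) (hV : ∀ i, 0 < V i) (hR : ∀ i, 0 < R i)
    (p z : ℝ) (hp0 : 0 < p) (hp1 : p < 1) (hz : 0 < z) :
    ∃ a0 b0 : ℝ, 0 < a0 ∧ 0 < b0 ∧ (∀ i, 0 < V i - 1 / a0 - 1 / b0) ∧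
      hamlingORSystem n V R p z a0 b0 := by
  have hnr : 0 < n := hn
  have hc : 0 < (1 - p) / p := div_pos (by linarith) hp0
  obtain ⟨u, t, hu0, hum, ht, hE1, hE2⟩ :=
    exists_ut hnr V R hV hR ((1 - p) / p) z p hc hz hp0
  have hu' : u ≠ 0 := hu0.ne'
  have ht' : t ≠ 0 := ht.ne'
  have ht1 : (0:ℝ) < t + 1 := by linarith
  have ht1' : t + 1 ≠ 0 := ht1.ne'
  have hp' : p ≠ 0 := hp0.ne'
  have hz' : z ≠ 0 := hz.ne'
  have hDa : ∀ i : Fin n, V i - 1 / ((t+1)/(t*u)) - 1 / ((t+1)/u) = V i - u := by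
    intro i
    rw [one_div_div, one_div_div]
    field_simp
    ring
  unfold Pfun Qfun at hE1
  refine ⟨(t+1)/(t*u), (t+1)/u, by positivity, by positivity, ?_, ?_, ?_⟩
  · intro i
    rw [hDa i]
    exact sub_pos.mpr (hum i)
  · -- first equation
    have hsum1 : (∑ i, (1 + (t+1)/u / ((t+1)/(t*u) * R i))
          / (V i - 1 / ((t+1)/(t*u)) - 1 / ((t+1)/u)))
        = SS (fun _ => (1:ℝ)) V u + t * SS (fun i => 1 / R i) V u := by
      unfold SS
      rw [Finset.mul_sum, ← Finset.sum_add_distrib]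
      apply Finset.sum_congr rfl
      intro i _
      rw [hDa i]
      have hVi : V i - u ≠ 0 := ne_of_gt (sub_pos.mpr (hum i))
      have hRi : R i ≠ 0 := (hR i).ne'
      field_simp
    rw [hsum1]
    field_simp at hE1 ⊢
    linear_combination hE1
  · -- second equation
    have hsum2 : (∑ i, (1 + (t+1)/(t*u) * R i / ((t+1)/u))
          / (V i - 1 / ((t+1)/(t*u)) - 1 / ((t+1)/u)))
        = SS (fun _ => (1:ℝ)) V u + (1/t) * SS R V u := by
      unfold SS
      rw [Finset.mul_sum, ← Finset.sum_add_distrib]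
      apply Finset.sum_congr rfl
      intro i _
      rw [hDa i]
      have hVi : V i - u ≠ 0 := ne_of_gt (sub_pos.mpr (hum i))
      have hRi : R i ≠ 0 := (hR i).ne'
      field_simp
    rw [hsum2]
    field_simp
    linear_combination hE2
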